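/- arXiv:2307.12662 — 2 statements merged into one kernel-verified Lean document; each statement's English description precedes it below -/
import Mathlib

section
/- Let θ : H₁ → H₂ be a bounded operator between Hilbert spaces such that θ*θ − 1 is compact and θ*θ is invertible. Let U = θ(θ*θ)^{-1/2} be the partial isometry from the polar decomposition. Then θ − U is a compact operator. -/
open ContinuousLinearMap

set_option maxHeartbeats 1000000 in

-- STATEMENT 7: If θ*θ − 1 is compact and θ*θ is invertible, then θ − U is compact, where
-- U = θ(θ*θ)^{-1/2} is the partial isometry (here a unitary onto its range) from the polar
-- decomposition of θ.
theorem stmt7 {H₁ H₂ : Type*} [NormedAddCommGroup H₁] [InnerProductSpace ℂ H₁] [CompleteSpace H₁]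
    [NormedAddCommGroup H₂] [InnerProductSpace ℂ H₂] [CompleteSpace H₂]
    (θ : H₁ →L[ℂ] H₂)
    (hcpt : IsCompactOperator ⇑(adjoint θ ∘L θ - 1))
    (hunit : IsUnit (adjoint θ ∘L θ))
    (U : H₁ →L[ℂ] H₂)
    (hU : U = θ ∘L Ring.inverse (CFC.sqrt (adjoint θ ∘L θ))) :
    IsCompactOperator ⇑(θ - U) := by
  set a : H₁ →L[ℂ] H₁ := adjoint θ ∘L θ with ha_def
  have ha : (0 : H₁ →L[ℂ] H₁) ≤ a := by
    rw [ContinuousLinearMap.nonneg_iff_isPositive]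
    simpa [one_def] using ContinuousLinearMap.isPositive_one.adjoint_conj θ
  set s : H₁ →L[ℂ] H₁ := CFC.sqrt a with hs_def
  have hs_nonneg : (0 : H₁ →L[ℂ] H₁) ≤ s := CFC.sqrt_nonneg (a := a)
  have hss : s * s = a := CFC.sqrt_mul_sqrt_self a ha
  -- s is a unit
  obtain ⟨u, hu⟩ := hunit
  have hus : (↑u : H₁ →L[ℂ] H₁) = a := hu
  have h1 : s * (s * ↑u⁻¹) = 1 := by
    rw [← mul_assoc, hss, ← hus, u.mul_inv]
  have h2 : (↑u⁻¹ * s) * s = 1 := by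
    rw [mul_assoc, hss, ← hus, u.inv_mul]
  have h3 : (↑u⁻¹ : H₁ →L[ℂ] H₁) * s = s * ↑u⁻¹ := by
    calc (↑u⁻¹ : H₁ →L[ℂ] H₁) * s = (↑u⁻¹ * s) * (s * (s * ↑u⁻¹)) := by rw [h1, mul_one]
      _ = ((↑u⁻¹ * s) * s) * (s * ↑u⁻¹) := by rw [mul_assoc, mul_assoc, mul_assoc]
      _ = s * ↑u⁻¹ := by rw [h2, one_mul]
  have hsu : IsUnit s := ⟨⟨s, s * ↑u⁻¹, h1, h3 ▸ h2⟩, rfl⟩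
  -- 1 + s is a unit
  have h1s : IsUnit (1 + s) := by
    have hmem : (-1 : ℝ) ∉ spectrum ℝ s := fun h => by
      linarith [spectrum_nonneg_of_nonneg hs_nonneg h]
    rw [spectrum.notMem_iff] at hmem
    have := hmem.neg
    have heq : -((algebraMap ℝ (H₁ →L[ℂ] H₁)) (-1) - s) = 1 + s := by
      simp [sub_eq_add_neg]; abel
    rwa [heq] at this
  -- key factorization
  have hfact : (1 + s) * (s - 1) = a - 1 := by
    have : (1 + s) * (s - 1) = s * s - 1 := by noncomm_ring
    rw [this, hss]
  have key : θ - U = ((θ ∘L Ring.inverse s) ∘L Ring.inverse (1 + s)) ∘L (a - 1) := by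
    have step1 : Ring.inverse (1 + s) * (a - 1) = s - 1 := by
      rw [← hfact, Ring.inverse_mul_cancel_left _ _ h1s]
    have step2 : Ring.inverse s * (s - 1) = 1 - Ring.inverse s := by
      rw [mul_sub, Ring.inverse_mul_cancel _ hsu, mul_one]
    have hmul : ((θ ∘L Ring.inverse s) ∘L Ring.inverse (1 + s)) ∘L (a - 1)
        = θ ∘L (Ring.inverse s * (Ring.inverse (1 + s) * (a - 1))) := by
      rw [mul_def, mul_def, comp_assoc, comp_assoc]
    rw [hmul, step1, step2, hU, comp_sub, one_def, comp_id]
  rw [key]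
  rw [coe_comp']
  exact hcpt.clm_comp _
end

section
/- Let H be a Hilbert space, x₀ a point of a topological space X, and T : X → 𝓑(H₁, H₂) a continuous map such that T(x₀) is surjective with finite-dimensional kernel. Then there exists an open neighborhood W of x₀ such that for all x ∈ W, T(x) restricted to ker(T(x₀))^⊥ is injective with closed range, T(x) is surjective, and dim ker(T(x)) = dim ker(T(x₀)). -/
open ContinuousLinearMap Module

-- STATEMENT 18: If T : X → 𝓑(H₁,H₂) is norm-continuous and T x₀ is surjective with
-- finite-dimensional kernel, then on some open neighborhood W of x₀ each T x is surjective,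
-- is injective with closed range when restricted to ker(T x₀)^⊥, and has
-- dim ker (T x) = dim ker (T x₀).
theorem stmt18 {X : Type*} [TopologicalSpace X]
    {H₁ H₂ : Type*} [NormedAddCommGroup H₁] [InnerProductSpace ℂ H₁] [CompleteSpace H₁]
    [NormedAddCommGroup H₂] [InnerProductSpace ℂ H₂] [CompleteSpace H₂]
    (T : X → H₁ →L[ℂ] H₂) (hT : Continuous T) (x₀ : X)
    (hsurj : Function.Surjective (T x₀))
    (hfin : FiniteDimensional ℂ (LinearMap.ker (T x₀ : H₁ →ₗ[ℂ] H₂))) :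
    ∃ W : Set X, IsOpen W ∧ x₀ ∈ W ∧ ∀ x ∈ W,
      Set.InjOn (T x) ((LinearMap.ker (T x₀ : H₁ →ₗ[ℂ] H₂))ᗮ : Set H₁) ∧
      IsClosed (T x '' ((LinearMap.ker (T x₀ : H₁ →ₗ[ℂ] H₂))ᗮ : Set H₁)) ∧
      Function.Surjective (T x) ∧
      finrank ℂ (LinearMap.ker (T x : H₁ →ₗ[ℂ] H₂)) = finrank ℂ (LinearMap.ker (T x₀ : H₁ →ₗ[ℂ] H₂)) := by
  classical
  set K : Submodule ℂ H₁ := LinearMap.ker (T x₀ : H₁ →ₗ[ℂ] H₂) with hK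
  haveI : CompleteSpace Kᗮ := (Submodule.isClosed_orthogonal K).completeSpace_coe
  set ι : (Kᗮ : Submodule ℂ H₁) →L[ℂ] H₁ := Kᗮ.subtypeL with hι
  set S : (Kᗮ : Submodule ℂ H₁) →L[ℂ] H₂ := (T x₀).comp ι with hS
  -- S is bijective
  have hSker : LinearMap.ker (S : (Kᗮ : Submodule ℂ H₁) →ₗ[ℂ] H₂) = ⊥ := by
    refine LinearMap.ker_eq_bot.mpr ?_
    intro v w h
    have hm : (v : H₁) - w ∈ K := by
      simp only [hK, LinearMap.mem_ker, map_sub]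
      have : T x₀ (v : H₁) = T x₀ (w : H₁) := h
      exact sub_eq_zero.mpr this
    have hm' : (v : H₁) - w ∈ Kᗮ := Kᗮ.sub_mem v.2 w.2
    have : (v : H₁) - w = 0 := by
      have := Submodule.inner_right_of_mem_orthogonal hm hm'
      simpa [inner_self_eq_zero] using this
    exact Subtype.ext (sub_eq_zero.mp this)
  have hSrange : LinearMap.range (S : (Kᗮ : Submodule ℂ H₁) →ₗ[ℂ] H₂) = ⊤ := by
    refine LinearMap.range_eq_top.mpr ?_
    intro y
    obtain ⟨u, hu⟩ := hsurj y
    obtain ⟨k, hk, z, hz, huz⟩ := K.exists_add_mem_mem_orthogonal u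
    refine ⟨⟨z, hz⟩, ?_⟩
    have : T x₀ z = T x₀ u := by
      rw [huz, map_add]
      have : T x₀ k = 0 := hk
      rw [this, zero_add]
    simpa [hS, hι, this] using hu
  set e : (Kᗮ : Submodule ℂ H₁) ≃L[ℂ] H₂ :=
    ContinuousLinearEquiv.ofBijective S hSker hSrange with he
  -- the continuous family of endomorphisms
  set g : X → (Kᗮ : Submodule ℂ H₁) →L[ℂ] (Kᗮ : Submodule ℂ H₁) :=
    fun x => (e.symm : H₂ →L[ℂ] Kᗮ).comp ((T x).comp ι) with hg
  have hgcont : Continuous g :=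
    continuous_const.clm_comp (hT.clm_comp continuous_const)
  have hg0 : IsUnit (g x₀) := by
    have : g x₀ = ContinuousLinearMap.id ℂ (Kᗮ : Submodule ℂ H₁) := by
      ext v
      exact congrArg Subtype.val (e.symm_apply_apply v)
    rw [this]
    exact isUnit_one
  set W : Set X := g ⁻¹' {u | IsUnit u} with hW
  have hUopen : IsOpen {u : (Kᗮ : Submodule ℂ H₁) →L[ℂ] Kᗮ | IsUnit u} :=
    Units.isOpen (R := (Kᗮ : Submodule ℂ H₁) →L[ℂ] Kᗮ)
  refine ⟨W, hUopen.preimage hgcont, hg0, ?_⟩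
  intro x hx
  have hxu : IsUnit (g x) := hx
  obtain ⟨u, hu⟩ := hxu
  have key1 : ∀ v, (↑u⁻¹ : (Kᗮ : Submodule ℂ H₁) →L[ℂ] Kᗮ) (g x v) = v := by
    intro v
    rw [← hu]
    show ((↑u⁻¹ : (Kᗮ : Submodule ℂ H₁) →L[ℂ] Kᗮ) * ↑u) v = v
    rw [u.inv_mul]; rfl
  have key2 : ∀ v, g x ((↑u⁻¹ : (Kᗮ : Submodule ℂ H₁) →L[ℂ] Kᗮ) v) = v := by
    intro v
    rw [← hu]
    show ((↑u : (Kᗮ : Submodule ℂ H₁) →L[ℂ] Kᗮ) * ↑u⁻¹) v = v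
    rw [u.mul_inv]; rfl
  -- T x ∘ ι is bijective
  have hinj : Function.Injective ((T x).comp ι) := by
    intro v w h
    have hg' : g x v = g x w := by
      simp only [hg]
      simp only [ContinuousLinearMap.comp_apply]
      rw [show (T x) (ι v) = (T x) (ι w) from h]
    calc v = (↑u⁻¹ : (Kᗮ : Submodule ℂ H₁) →L[ℂ] Kᗮ) (g x v) := (key1 v).symm
      _ = (↑u⁻¹ : (Kᗮ : Submodule ℂ H₁) →L[ℂ] Kᗮ) (g x w) := by rw [hg']
      _ = w := key1 w
  have hsurjx : Function.Surjective ((T x).comp ι) := by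
    intro y
    refine ⟨(↑u⁻¹ : (Kᗮ : Submodule ℂ H₁) →L[ℂ] Kᗮ) (e.symm y), ?_⟩
    have hv : g x ((↑u⁻¹ : (Kᗮ : Submodule ℂ H₁) →L[ℂ] Kᗮ) (e.symm y)) = e.symm y :=
      key2 (e.symm y)
    set v := (↑u⁻¹ : (Kᗮ : Submodule ℂ H₁) →L[ℂ] Kᗮ) (e.symm y) with hvdef
    have hv' : e.symm (((T x).comp ι) v) = e.symm y := hv
    calc ((T x).comp ι) v = e (e.symm (((T x).comp ι) v)) := (e.apply_symm_apply _).symm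
      _ = e (e.symm y) := by rw [hv']
      _ = y := e.apply_symm_apply y
  have hinjOn : Set.InjOn (T x) ((Kᗮ : Submodule ℂ H₁) : Set H₁) := by
    intro a ha b hb hab
    have : ((T x).comp ι) ⟨a, ha⟩ = ((T x).comp ι) ⟨b, hb⟩ := hab
    exact congrArg Subtype.val (hinj this)
  have himg : T x '' ((Kᗮ : Submodule ℂ H₁) : Set H₁) = Set.univ := by
    apply Set.eq_univ_of_forall
    intro y
    obtain ⟨v, hv⟩ := hsurjx y
    exact ⟨v, v.2, hv⟩
  have hTxsurj : Function.Surjective (T x) := by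
    intro y
    obtain ⟨v, hv⟩ := hsurjx y
    exact ⟨v, hv⟩
  refine ⟨hinjOn, himg ▸ isClosed_univ, hTxsurj, ?_⟩
  -- kernel dimension
  set ex : (Kᗮ : Submodule ℂ H₁) ≃L[ℂ] H₂ :=
    ContinuousLinearEquiv.ofBijective ((T x).comp ι)
      (LinearMap.ker_eq_bot.mpr hinj) (LinearMap.range_eq_top.mpr hsurjx) with hex
  -- injection ker(T x) → K via orthogonal projection
  haveI : CompleteSpace K := FiniteDimensional.complete ℂ K
  set φ : (LinearMap.ker (T x : H₁ →ₗ[ℂ] H₂) : Submodule ℂ H₁) →ₗ[ℂ] K :=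
    (Submodule.orthogonalProjection K).toLinearMap.comp (LinearMap.ker (T x : H₁ →ₗ[ℂ] H₂)).subtype with hφ
  have hφinj : Function.Injective φ := by
    intro v w h
    have hmem : (v : H₁) - w ∈ Kᗮ := by
      have hp : Submodule.orthogonalProjection K ((v : H₁) - w) = 0 := by
        rw [map_sub]
        have : Submodule.orthogonalProjection K (v : H₁) = Submodule.orthogonalProjection K (w : H₁) := h
        rw [this, sub_self]
      have h1 := Submodule.sub_starProjection_mem_orthogonal (K := K) ((v : H₁) - w)
      rw [Submodule.starProjection_apply, hp] at h1
      simpa using h1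
    have hker : T x ((v : H₁) - w) = 0 := by
      rw [map_sub]
      have hv0 : T x (v : H₁) = 0 := v.2
      have hw0 : T x (w : H₁) = 0 := w.2
      rw [hv0, hw0, sub_self]
    have : ((T x).comp ι) ⟨(v : H₁) - w, hmem⟩ = ((T x).comp ι) 0 := by
      simp only [hι, ContinuousLinearMap.comp_apply, Submodule.subtypeL_apply, map_zero]
      exact hker
    have := hinj this
    exact Subtype.ext (sub_eq_zero.mp (by simpa [Subtype.ext_iff] using this))
  haveI : FiniteDimensional ℂ (LinearMap.ker (T x : H₁ →ₗ[ℂ] H₂) : Submodule ℂ H₁) :=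
    FiniteDimensional.of_injective φ hφinj
  -- injection K → ker(T x)
  set m : K →L[ℂ] H₁ :=
    K.subtypeL - (ι.comp ((ex.symm : H₂ →L[ℂ] Kᗮ).comp ((T x).comp K.subtypeL))) with hm
  have hmker : ∀ k : K, T x (m k) ∈ ({0} : Set H₂) := by
    intro k
    have h1 : T x (ι (ex.symm (T x (k : H₁)))) = T x (k : H₁) := by
      have : ((T x).comp ι) (ex.symm (T x (k : H₁))) = ex (ex.symm (T x (k : H₁))) := rfl
      calc T x (ι (ex.symm (T x (k : H₁)))) = ex (ex.symm (T x (k : H₁))) := this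
        _ = T x (k : H₁) := ex.apply_symm_apply _
    simp only [hm, ContinuousLinearMap.sub_apply, ContinuousLinearMap.comp_apply, map_sub,
      Submodule.subtypeL_apply, Set.mem_singleton_iff, ContinuousLinearEquiv.coe_coe]
    rw [h1, sub_self]
  set ψ : K →ₗ[ℂ] (LinearMap.ker (T x : H₁ →ₗ[ℂ] H₂) : Submodule ℂ H₁) :=
    LinearMap.codRestrict (LinearMap.ker (T x : H₁ →ₗ[ℂ] H₂)) m.toLinearMap
      (fun k => by simpa using hmker k) with hψ
  have hψinj : Function.Injective ψ := by
    intro k l h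
    have hml : m k = m l := congrArg Subtype.val h
    have hsub : (k : H₁) - l = ι (ex.symm (T x (k : H₁))) - ι (ex.symm (T x (l : H₁))) := by
      have h2 := hml
      simp only [hm, ContinuousLinearMap.sub_apply, ContinuousLinearMap.comp_apply,
        Submodule.subtypeL_apply, ContinuousLinearEquiv.coe_coe] at h2
      exact sub_eq_sub_iff_sub_eq_sub.mp h2
    have hmemo : (k : H₁) - l ∈ Kᗮ := by
      rw [hsub]
      exact Kᗮ.sub_mem (ex.symm (T x (k : H₁))).2 (ex.symm (T x (l : H₁))).2
    have hmemK : (k : H₁) - l ∈ K := K.sub_mem k.2 l.2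
    have : (k : H₁) - l = 0 := by
      have := Submodule.inner_right_of_mem_orthogonal hmemK hmemo
      simpa [inner_self_eq_zero] using this
    exact Subtype.ext (sub_eq_zero.mp this)
  exact le_antisymm (LinearMap.finrank_le_finrank_of_injective hφinj)
    (LinearMap.finrank_le_finrank_of_injective hψinj)
end
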